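/- Let S_2 be the eventually periodic sequence in Z/4Z with initial block 21210130 followed by the infinitely repeated period 200132022112002110220130. Then for every integer k ≥ 0, the Steinhaus triangle of the initial segment S_2[8k] of length 8k is strongly balanced in Z/4Z. -/

import Mathlib

/-- Next row of a Steinhaus triangle: pairwise sums of adjacent entries. -/
def nextRow {m : ℕ} (l : List (ZMod m)) : List (ZMod m) :=
  List.zipWith (· + ·) l l.tail

/-- The rows of the Steinhaus triangle generated by the first row `l`. -/
def triangleRows {m : ℕ} (l : List (ZMod m)) : List (List (ZMod m)) :=
  (List.range l.length).map (fun i => nextRow^[i] l)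

/-- All entries of the Steinhaus triangle generated by `l`. -/
def triangleEntries {m : ℕ} (l : List (ZMod m)) : List (ZMod m) :=
  (triangleRows l).flatten

/-- The Steinhaus triangle of `l` is balanced: all elements of `ZMod m`
occur with the same multiplicity among its entries. -/
def IsBalanced {m : ℕ} (l : List (ZMod m)) : Prop :=
  ∀ a b : ZMod m, (triangleEntries l).count a = (triangleEntries l).count b

/-- The Steinhaus triangle of `l` is strongly balanced (with respect to a
given `step`): for every `t` with `step * t ≤ l.length`, the Steinhaus triangle
of the initial segment of `l` of length `l.length - step * t` is balanced. -/
def IsStronglyBalanced {m : ℕ} (step : ℕ) (l : List (ZMod m)) : Prop :=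
  ∀ t : ℕ, step * t ≤ l.length → IsBalanced (l.take (l.length - step * t))

/-- The eventually periodic sequence with initial block `I` and period `P`. -/
def evPeriodic {m : ℕ} (I P : List (ZMod m)) : ℕ → ZMod m :=
  fun i => if i < I.length then I.getD i 0 else P.getD ((i - I.length) % P.length) 0

/-- The initial segment of length `l` of the sequence `S`. -/
def seg {m : ℕ} (S : ℕ → ZMod m) (l : ℕ) : List (ZMod m) :=
  (List.range l).map S

def S2 : ℕ → ZMod 4 :=
  evPeriodic ([2,1,2,1,0,1,3,0] : List (ZMod 4)) ([2,0,0,1,3,2,0,2,2,1,1,2,0,0,2,1,1,0,2,2,0,1,3,0] : List (ZMod 4))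

def dS (T : ℕ → ZMod 4) : ℕ → ZMod 4 := fun j => T j + T (j+1)

def stepI (I P : List (ZMod 4)) : List (ZMod 4) :=
  List.zipWith (· + ·) I (I.tail ++ [P.getD 0 0])

def stepP (P : List (ZMod 4)) : List (ZMod 4) :=
  List.zipWith (· + ·) P (P.rotate 1)

lemma length_seg {m : ℕ} (S : ℕ → ZMod m) (n : ℕ) : (seg S n).length = n := by
  simp [seg]

lemma seg_take {m : ℕ} (S : ℕ → ZMod m) {a n : ℕ} (h : a ≤ n) :
    (seg S n).take a = seg S a := by
  unfold seg
  rw [← List.map_take, List.take_range, Nat.min_eq_left h]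

lemma nextRow_seg (T : ℕ → ZMod 4) (n : ℕ) :
    nextRow (seg T (n+1)) = seg (dS T) n := by
  apply List.ext_getElem
  · simp [nextRow, seg]
  · intro i h1 h2
    simp [nextRow, seg, List.getElem_zipWith, List.getElem_tail, dS]

lemma triangleRows_seg_succ (T : ℕ → ZMod 4) (n : ℕ) :
    triangleRows (seg T (n+1)) = seg T (n+1) :: triangleRows (seg (dS T) n) := by
  unfold triangleRows
  rw [length_seg, length_seg, List.range_succ_eq_map, List.map_cons, List.map_map]
  congr 1
  apply List.map_congr_left
  intro i _
  simp [Function.comp, Function.iterate_succ_apply, nextRow_seg]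

lemma trc_step_gen (T : ℕ → ZMod 4) (n : ℕ) (a : ZMod 4) :
    (triangleEntries (seg T (n+1))).count a
      = (seg T (n+1)).count a + (triangleEntries (seg (dS T) n)).count a := by
  unfold triangleEntries
  rw [triangleRows_seg_succ, List.flatten_cons, List.count_append]

lemma dS_evPeriodic (I P : List (ZMod 4)) (hI : I.length = 8) (hP : P.length = 24) :
    dS (evPeriodic I P) = evPeriodic (stepI I P) (stepP P) := by
  have hlI : (stepI I P).length = 8 := by simp [stepI, hI]
  have hlP : (stepP P).length = 24 := by simp [stepP, hP]
  funext i
  unfold dS evPeriodic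
  rw [hlI, hlP, hI, hP]
  rcases Nat.lt_or_ge i 8 with hi | hi
  · rw [if_pos hi, if_pos hi]
    unfold stepI at hlI ⊢
    have hb : i < (List.zipWith (· + ·) I (I.tail ++ [P.getD 0 0])).length := by omega
    rw [List.getD_eq_getElem _ _ hb]
    rw [List.getElem_zipWith]
    rcases Nat.lt_or_ge (i+1) 8 with hi1 | hi1
    · rw [if_pos hi1]
      have h2 : i < I.tail.length := by simp [hI]; omega
      rw [List.getElem_append_left h2, List.getElem_tail]
      rw [List.getD_eq_getElem _ _ (by omega), List.getD_eq_getElem _ _ (by omega)]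
    · have hi7 : i = 7 := by omega
      rw [if_neg (by omega)]
      have h0 : (i + 1 - 8) % 24 = 0 := by omega
      rw [h0]
      rw [List.getElem_append_right (by simpa [hI] using by omega : I.tail.length ≤ i)]
      have h3 : i - I.tail.length = 0 := by simp [hI]; omega
      simp only [h3]
      rw [List.getD_eq_getElem _ _ (by omega)]
      simp
  · rw [if_neg (by omega), if_neg (by omega), if_neg (by omega)]
    unfold stepP at hlP ⊢
    have hb : (i - 8) % 24 < (List.zipWith (· + ·) P (P.rotate 1)).length := by omega
    rw [List.getD_eq_getElem _ _ hb]
    rw [List.getElem_zipWith, List.getElem_rotate]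
    rw [List.getD_eq_getElem _ _ (by omega), List.getD_eq_getElem _ _ (by omega)]
    congr 1
    apply getElem_congr_idx
    rw [hP]; omega

def IP : ℕ → List (ZMod 4) × List (ZMod 4)
  | 0 => (([2,1,2,1,0,1,3,0] : List (ZMod 4)),
          ([2,0,0,1,3,2,0,2,2,1,1,2,0,0,2,1,1,0,2,2,0,1,3,0] : List (ZMod 4)))
  | n+1 => (stepI (IP n).1 (IP n).2, stepP (IP n).2)

def rowSeq (t : ℕ) : ℕ → ZMod 4 := evPeriodic (IP t).1 (IP t).2

lemma IP_len : ∀ t, (IP t).1.length = 8 ∧ (IP t).2.length = 24 := by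
  intro t
  induction t with
  | zero => constructor <;> rfl
  | succ n ih =>
    obtain ⟨h1, h2⟩ := ih
    constructor
    · simp [IP, stepI, h1]
    · simp [IP, stepP, h2]

lemma dS_rowSeq (t : ℕ) : dS (rowSeq t) = rowSeq (t+1) := by
  unfold rowSeq
  rw [dS_evPeriodic _ _ (IP_len t).1 (IP_len t).2]
  rfl

lemma count_seg_period (t M : ℕ) (hM : 8 ≤ M) (a : ZMod 4) :
    (seg (rowSeq t) (M + 24)).count a
      = (seg (rowSeq t) M).count a + ((IP t).2).count a := by
  obtain ⟨hI, hP⟩ := IP_len t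
  unfold seg
  rw [List.range_add, List.map_append, List.count_append]
  congr 1
  rw [List.map_map]
  have hrot : (List.range 24).map (rowSeq t ∘ (M + ·)) = (IP t).2.rotate ((M - 8) % 24) := by
    apply List.ext_getElem
    · simp [hP]
    · intro j h1 h2
      simp only [List.getElem_map, List.getElem_range, Function.comp_apply,
        List.getElem_rotate, hP]
      unfold rowSeq evPeriodic
      rw [if_neg (by omega), hI]
      rw [List.getD_eq_getElem _ _ (by rw [hP]; omega)]
      apply getElem_congr_idx
      rw [hP]; omega
  rw [hrot]
  exact (List.rotate_perm _ _).count_eq a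

def cnt (t M : ℕ) (a : ZMod 4) : ℕ := (seg (rowSeq t) M).count a
def trc (t M : ℕ) (a : ZMod 4) : ℕ := (triangleEntries (seg (rowSeq t) M)).count a

lemma trc_step (u v n m : ℕ) (a : ZMod 4) (huv : u + 1 = v) (hnm : m = n + 1) :
    trc u m a = cnt u m a + trc v n a := by
  subst huv hnm
  unfold trc cnt
  rw [trc_step_gen, dS_rowSeq]

def strip (t M : ℕ) (a : ZMod 4) : ℕ :=
  cnt t (M+8) a + cnt (t+1) (M+7) a + cnt (t+2) (M+6) a + cnt (t+3) (M+5) a +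
  cnt (t+4) (M+4) a + cnt (t+5) (M+3) a + cnt (t+6) (M+2) a + cnt (t+7) (M+1) a

lemma trc_strip (t M : ℕ) (a : ZMod 4) :
    trc t (M+8) a = strip t M a + trc (t+8) M a := by
  rw [trc_step t (t+1) (M+7) (M+8) a rfl (by omega),
      trc_step (t+1) (t+2) (M+6) (M+7) a (by omega) (by omega),
      trc_step (t+2) (t+3) (M+5) (M+6) a (by omega) (by omega),
      trc_step (t+3) (t+4) (M+4) (M+5) a (by omega) (by omega),
      trc_step (t+4) (t+5) (M+3) (M+4) a (by omega) (by omega),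
      trc_step (t+5) (t+6) (M+2) (M+3) a (by omega) (by omega),
      trc_step (t+6) (t+7) (M+1) (M+2) a (by omega) (by omega),
      trc_step (t+7) (t+8) M (M+1) a (by omega) rfl]
  unfold strip
  omega

def pc (t : ℕ) (a : ZMod 4) : ℕ :=
  ((IP t).2).count a + ((IP (t+1)).2).count a + ((IP (t+2)).2).count a +
  ((IP (t+3)).2).count a + ((IP (t+4)).2).count a + ((IP (t+5)).2).count a +
  ((IP (t+6)).2).count a + ((IP (t+7)).2).count a

lemma cnt_period (t M : ℕ) (hM : 8 ≤ M) (a : ZMod 4) :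
    cnt t (M + 24) a = cnt t M a + ((IP t).2).count a :=
  count_seg_period t M hM a

lemma strip_period (t M : ℕ) (hM : 7 ≤ M) (a : ZMod 4) :
    strip t (M + 24) a = strip t M a + pc t a := by
  unfold strip pc
  rw [show M+24+8 = (M+8)+24 by omega, show M+24+7 = (M+7)+24 by omega,
      show M+24+6 = (M+6)+24 by omega, show M+24+5 = (M+5)+24 by omega,
      show M+24+4 = (M+4)+24 by omega, show M+24+3 = (M+3)+24 by omega,
      show M+24+2 = (M+2)+24 by omega, show M+24+1 = (M+1)+24 by omega,
      cnt_period t (M+8) (by omega), cnt_period (t+1) (M+7) (by omega),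
      cnt_period (t+2) (M+6) (by omega), cnt_period (t+3) (M+5) (by omega),
      cnt_period (t+4) (M+4) (by omega), cnt_period (t+5) (M+3) (by omega),
      cnt_period (t+6) (M+2) (by omega), cnt_period (t+7) (M+1) (by omega)]
  omega

lemma trc32 (M : ℕ) (a : ZMod 4) : trc 32 M a = trc 8 M a := by
  unfold trc
  rw [show rowSeq 32 = rowSeq 8 by unfold rowSeq; rw [show IP 32 = IP 8 by decide]]

lemma pc_bal8 : ∀ a b : ZMod 4, pc 8 a = pc 8 b := by decide
lemma pc_bal16 : ∀ a b : ZMod 4, pc 16 a = pc 16 b := by decide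
lemma pc_bal24 : ∀ a b : ZMod 4, pc 24 a = pc 24 b := by decide

def WS (n : ℕ) (a : ZMod 4) : ℕ :=
  strip 24 (8*n) a + strip 16 (8*n+8) a + strip 8 (8*n+16) a + pc 0 a

lemma WS_bal : ∀ n, 1 ≤ n → ∀ a b : ZMod 4, WS n a = WS n b := by
  intro n
  induction n using Nat.strong_induction_on with
  | _ n ih =>
    intro hn a b
    match n, hn with
    | 1, _ => revert a b; decide
    | 2, _ => revert a b; decide
    | 3, _ => revert a b; decide
    | (m+4), _ =>
      have hm : 1 ≤ m + 1 := by omega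
      have h1 := ih (m+1) (by omega) hm a b
      have e : ∀ x : ZMod 4, WS (m+4) x = WS (m+1) x + (pc 24 x + pc 16 x + pc 8 x) := by
        intro x
        unfold WS
        rw [show 8*(m+4) = 8*(m+1)+24 by ring,
            show 8*(m+1)+24+8 = (8*(m+1)+8)+24 by ring,
            show 8*(m+1)+24+16 = (8*(m+1)+16)+24 by ring,
            strip_period 24 (8*(m+1)) (by omega),
            strip_period 16 (8*(m+1)+8) (by omega),
            strip_period 8 (8*(m+1)+16) (by omega)]
        ring
      rw [e a, e b, h1, pc_bal24 a b, pc_bal16 a b, pc_bal8 a b]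

def Q (n : ℕ) : Prop :=
  (∀ a b : ZMod 4, trc 0 (8*n) a = trc 0 (8*n) b) ∧
  (∀ a b : ZMod 4, trc 8 (8*n) a + strip 0 (8*n) a
      = trc 8 (8*n) b + strip 0 (8*n) b) ∧
  (∀ a b : ZMod 4, trc 16 (8*n) a + (strip 8 (8*n) a + strip 0 (8*n+8) a)
      = trc 16 (8*n) b + (strip 8 (8*n) b + strip 0 (8*n+8) b)) ∧
  (∀ a b : ZMod 4, trc 24 (8*n) a + (strip 16 (8*n) a + strip 8 (8*n+8) a + strip 0 (8*n+16) a)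
      = trc 24 (8*n) b + (strip 16 (8*n) b + strip 8 (8*n+8) b + strip 0 (8*n+16) b))

lemma ts0 (n : ℕ) (a : ZMod 4) :
    trc 0 (8*(n+1)) a = strip 0 (8*n) a + trc 8 (8*n) a := by
  rw [show (8:ℕ)*(n+1) = 8*n+8 by ring]; exact trc_strip 0 (8*n) a

lemma ts8 (n : ℕ) (a : ZMod 4) :
    trc 8 (8*(n+1)) a = strip 8 (8*n) a + trc 16 (8*n) a := by
  rw [show (8:ℕ)*(n+1) = 8*n+8 by ring]; exact trc_strip 8 (8*n) a

lemma ts16 (n : ℕ) (a : ZMod 4) :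
    trc 16 (8*(n+1)) a = strip 16 (8*n) a + trc 24 (8*n) a := by
  rw [show (8:ℕ)*(n+1) = 8*n+8 by ring]; exact trc_strip 16 (8*n) a

lemma ts24 (n : ℕ) (a : ZMod 4) :
    trc 24 (8*(n+1)) a = strip 24 (8*n) a + trc 8 (8*n) a := by
  rw [show (8:ℕ)*(n+1) = 8*n+8 by ring, trc_strip 24 (8*n) a, trc32]

lemma Q_step (n : ℕ) (hn : 1 ≤ n) (h : Q n) : Q (n+1) := by
  obtain ⟨h0, h1, h2, h3⟩ := h
  have e2 : 8*(n+1)+8 = 8*n+16 := by ring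
  have e3 : 8*(n+1)+16 = 8*n+24 := by ring
  have e : 8*(n+1) = 8*n+8 := by ring
  refine ⟨?_, ?_, ?_, ?_⟩
  · intro a b
    rw [ts0 n a, ts0 n b]
    have := h1 a b
    omega
  · intro a b
    rw [ts8 n a, ts8 n b, e]
    have := h2 a b
    omega
  · intro a b
    rw [ts16 n a, ts16 n b, e2, e]
    have := h3 a b
    omega
  · intro a b
    rw [ts24 n a, ts24 n b, e3, e2, e,
        strip_period 0 (8*n) (by omega) a, strip_period 0 (8*n) (by omega) b]
    have hr1 := h1 a b
    have hws := WS_bal n hn a b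
    unfold WS at hws
    omega

lemma Q_all : ∀ n, Q n := by
  intro n
  induction n with
  | zero => refine ⟨?_, ?_, ?_, ?_⟩ <;> decide
  | succ m ih =>
    match m, ih with
    | 0, _ => refine ⟨?_, ?_, ?_, ?_⟩ <;> decide
    | (k+1), ih => exact Q_step (k+1) (by omega) ih

lemma rowSeq_zero : rowSeq 0 = S2 := rfl

theorem stmt2 (k : ℕ) :
    IsStronglyBalanced 8 (seg S2 (8 * k)) := by
  intro t ht
  rw [length_seg] at ht ⊢
  rw [show 8*k - 8*t = 8*(k-t) by omega, seg_take S2 (by omega)]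
  intro a b
  have := (Q_all (k-t)).1 a b
  rwa [trc, rowSeq_zero] at this
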